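/- Let W be a compact open subgroup of G which is tidy for the automorphism α, let w ∈ G, and suppose that αᵐ(w) ∈ W and αⁿ(w) ∈ W for integers m < n. Then αᵏ(w) ∈ W for every integer k with m ≤ k ≤ n. -/

import Mathlib

open scoped Pointwise

universe u

variable {G : Type u} [Group G] [TopologicalSpace G] [IsTopologicalGroup G]

/-- `V_{α+} = ⋂_{n ≥ 0} αⁿ(V)`. -/
def plusSet (α : MulAut G) (V : Set G) : Set G := ⋂ n : ℕ, ⇑(α ^ n) '' V

/-- `V_{α−} = ⋂_{n ≥ 0} α⁻ⁿ(V)`. -/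
def minusSet (α : MulAut G) (V : Set G) : Set G := ⋂ n : ℕ, ⇑(α⁻¹ ^ n) '' V

/-- `V_{α++} = ⋃_{n ≥ 0} αⁿ(V_{α+})`. -/
def plusplusSet (α : MulAut G) (V : Set G) : Set G := ⋃ n : ℕ, ⇑(α ^ n) '' plusSet α V

/-- `V` is tidy for `α`: condition T1(α), `V = V_{α+}·V_{α−}`, together with
condition T2(α), `V_{α++}` is closed. -/
def IsTidy (α : MulAut G) (V : Set G) : Prop :=
  V = plusSet α V * minusSet α V ∧ IsClosed (plusplusSet α V)

/-- `U` is invariably tidy for `𝔞`: for every `γ` in the group generated by `𝔞`,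
`γ(U)` is tidy for every `a ∈ 𝔞`. -/
def InvariablyTidy (𝔞 : Set (MulAut G)) (U : Set G) : Prop :=
  ∀ γ ∈ Subgroup.closure 𝔞, ∀ a ∈ 𝔞, IsTidy a (⇑γ '' U)

/-- `U_𝔞 = ⋂_{a ∈ 𝔞} U_{a+}` (set version). -/
def interSet (𝔞 : Set (MulAut G)) (U : Set G) : Set G := ⋂ a ∈ 𝔞, plusSet a U

/-- `H_{α+}` as a subgroup. -/
def plusSub (α : MulAut G) (H : Subgroup G) : Subgroup G :=
  ⨅ n : ℕ, H.map (MulEquiv.toMonoidHom (α ^ n))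

/-- `H_𝔞 = ⋂_{a ∈ 𝔞} H_{a+}` as a subgroup. -/
def interSub (𝔞 : Set (MulAut G)) (H : Subgroup G) : Subgroup G := ⨅ a ∈ 𝔞, plusSub a H

/-- The scale of `α` : the minimum of `[α(V) : α(V) ∩ V]` over compact open subgroups `V`. -/
noncomputable def scale (α : MulAut G) : ℕ :=
  sInf {n : ℕ | ∃ V : Subgroup G, IsCompact (V : Set G) ∧ IsOpen (V : Set G) ∧
    n = V.relIndex (V.map (MulEquiv.toMonoidHom α))}

section TidyAux

set_option linter.unusedSectionVars false

/-- Membership in the image of a set under an automorphism. -/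
lemma mem_image_aut {β : MulAut G} {V : Set G} {x : G} :
    x ∈ ⇑β '' V ↔ β⁻¹ x ∈ V := by
  constructor
  · rintro ⟨y, hy, rfl⟩
    simpa using hy
  · intro h
    exact ⟨β⁻¹ x, h, by simp⟩

lemma mem_plusSet {α : MulAut G} {V : Set G} {x : G} :
    x ∈ plusSet α V ↔ ∀ j : ℕ, (α⁻¹ ^ j) x ∈ V := by
  simp only [plusSet, Set.mem_iInter, mem_image_aut, inv_pow]

lemma mem_minusSet {α : MulAut G} {V : Set G} {x : G} :
    x ∈ minusSet α V ↔ ∀ j : ℕ, (α ^ j) x ∈ V := by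
  simp only [minusSet, Set.mem_iInter, mem_image_aut, inv_pow, inv_inv]

lemma mem_ppSet {α : MulAut G} {V : Set G} {x : G} :
    x ∈ plusplusSet α V ↔ ∃ j : ℕ, (α⁻¹ ^ j) x ∈ plusSet α V := by
  simp only [plusplusSet, Set.mem_iUnion, mem_image_aut, inv_pow]

variable {α : MulAut G} {W : Subgroup G}

lemma plusSet_subset : plusSet α (W : Set G) ⊆ (W : Set G) := by
  intro x hx
  simpa using mem_plusSet.mp hx 0

lemma one_mem_plusSet : (1 : G) ∈ plusSet α (W : Set G) := by
  rw [mem_plusSet]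
  intro j
  rw [map_one]
  exact W.one_mem

lemma mul_mem_plusSet {x y : G} (hx : x ∈ plusSet α (W : Set G))
    (hy : y ∈ plusSet α (W : Set G)) : x * y ∈ plusSet α (W : Set G) := by
  rw [mem_plusSet] at *
  intro j
  rw [map_mul]
  exact W.mul_mem (hx j) (hy j)

lemma inv_mem_plusSet {x : G} (hx : x ∈ plusSet α (W : Set G)) :
    x⁻¹ ∈ plusSet α (W : Set G) := by
  rw [mem_plusSet] at *
  intro j
  rw [map_inv]
  exact W.inv_mem (hx j)

lemma ainv_mem_plusSet {x : G} (hx : x ∈ plusSet α (W : Set G)) (j : ℕ) :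
    (α⁻¹ ^ j) x ∈ plusSet α (W : Set G) := by
  rw [mem_plusSet] at *
  intro i
  have : (α⁻¹ ^ i) ((α⁻¹ ^ j) x) = (α⁻¹ ^ (i + j)) x := by
    rw [pow_add, MulAut.mul_apply]
  rw [this]
  exact hx _

lemma apow_mem_minusSet {x : G} (hx : x ∈ minusSet α (W : Set G)) (j : ℕ) :
    (α ^ j) x ∈ W :=
  mem_minusSet.mp hx j

/-- `x ∈ αᵏ(W₊)` iff `α⁻ᵏ x ∈ W₊`. -/
lemma mem_image_pow_plusSet {x : G} {k : ℕ} :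
    x ∈ ⇑(α ^ k) '' plusSet α (W : Set G) ↔ (α⁻¹ ^ k) x ∈ plusSet α (W : Set G) := by
  rw [mem_image_aut, inv_pow]

lemma image_pow_plusSet_mono {k M : ℕ} (hkM : k ≤ M) :
    ⇑(α ^ k) '' plusSet α (W : Set G) ⊆ ⇑(α ^ M) '' plusSet α (W : Set G) := by
  intro x hx
  rw [mem_image_pow_plusSet] at *
  have : (α⁻¹ ^ M) x = (α⁻¹ ^ (M - k)) ((α⁻¹ ^ k) x) := by
    rw [← MulAut.mul_apply, ← pow_add, Nat.sub_add_cancel hkM]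
  rw [this]
  exact ainv_mem_plusSet hx _

lemma mem_image_pow_plusSet_of_le {x : G} {k M : ℕ} (hkM : k ≤ M)
    (hx : x ∈ ⇑(α ^ k) '' plusSet α (W : Set G)) :
    x ∈ ⇑(α ^ M) '' plusSet α (W : Set G) :=
  image_pow_plusSet_mono hkM hx

lemma one_mem_image_pow_plusSet (k : ℕ) :
    (1 : G) ∈ ⇑(α ^ k) '' plusSet α (W : Set G) := by
  rw [mem_image_pow_plusSet, map_one]
  exact one_mem_plusSet

lemma mul_mem_image_pow_plusSet {x y : G} {k : ℕ}
    (hx : x ∈ ⇑(α ^ k) '' plusSet α (W : Set G))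
    (hy : y ∈ ⇑(α ^ k) '' plusSet α (W : Set G)) :
    x * y ∈ ⇑(α ^ k) '' plusSet α (W : Set G) := by
  rw [mem_image_pow_plusSet] at *
  rw [map_mul]
  exact mul_mem_plusSet hx hy

lemma inv_mem_image_pow_plusSet {x : G} {k : ℕ}
    (hx : x ∈ ⇑(α ^ k) '' plusSet α (W : Set G)) :
    x⁻¹ ∈ ⇑(α ^ k) '' plusSet α (W : Set G) := by
  rw [mem_image_pow_plusSet] at *
  rw [map_inv]
  exact inv_mem_plusSet hx

lemma mul_mem_ppSet {x y : G} (hx : x ∈ plusplusSet α (W : Set G))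
    (hy : y ∈ plusplusSet α (W : Set G)) : x * y ∈ plusplusSet α (W : Set G) := by
  rw [plusplusSet, Set.mem_iUnion] at *
  obtain ⟨j, hj⟩ := hx
  obtain ⟨i, hi⟩ := hy
  exact ⟨max j i, mul_mem_image_pow_plusSet
    (mem_image_pow_plusSet_of_le (le_max_left j i) hj)
    (mem_image_pow_plusSet_of_le (le_max_right j i) hi)⟩

lemma inv_mem_ppSet {x : G} (hx : x ∈ plusplusSet α (W : Set G)) :
    x⁻¹ ∈ plusplusSet α (W : Set G) := by
  rw [plusplusSet, Set.mem_iUnion] at *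
  obtain ⟨j, hj⟩ := hx
  exact ⟨j, inv_mem_image_pow_plusSet hj⟩

lemma plusSet_subset_ppSet : plusSet α (W : Set G) ⊆ plusplusSet α (W : Set G) := by
  intro x hx
  rw [mem_ppSet]
  exact ⟨0, by simpa using hx⟩

lemma apow_mem_ppSet {x : G} (hx : x ∈ plusplusSet α (W : Set G)) (j : ℕ) :
    (α ^ j) x ∈ plusplusSet α (W : Set G) := by
  rw [mem_ppSet] at *
  obtain ⟨i, hi⟩ := hx
  refine ⟨i + j, ?_⟩
  have : (α⁻¹ ^ (i + j)) ((α ^ j) x) = (α⁻¹ ^ i) x := by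
    rw [pow_add, ← MulAut.mul_apply, mul_assoc]
    simp [inv_pow]
  rw [this]
  exact hi

variable [T2Space G]

lemma continuous_pow_apply (hα : Continuous ⇑α) (nn : ℕ) : Continuous ⇑(α ^ nn) := by
  induction nn with
  | zero =>
    have : ⇑(α ^ 0) = id := funext fun x => by simp
    rw [this]; exact continuous_id
  | succ j ih =>
    have : ⇑(α ^ (j + 1)) = ⇑(α ^ j) ∘ ⇑α := funext fun x => by
      rw [pow_succ, MulAut.mul_apply]; rfl
    rw [this]; exact ih.comp hα

lemma plusSet_isCompact (hα : Continuous ⇑α) (hWc : IsCompact (W : Set G)) :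
    IsCompact (plusSet α (W : Set G)) := by
  have hcl : IsClosed (plusSet α (W : Set G)) :=
    isClosed_iInter fun nn => (hWc.image (continuous_pow_apply hα nn)).isClosed
  exact hWc.of_isClosed_subset hcl plusSet_subset

lemma one_mem_H : (1 : G) ∈ plusplusSet α (W : Set G) ∩ (W : Set G) :=
  ⟨plusSet_subset_ppSet one_mem_plusSet, W.one_mem⟩

lemma mem_H_mul {x y : G} (hx : x ∈ plusplusSet α (W : Set G) ∩ (W : Set G))
    (hy : y ∈ plusplusSet α (W : Set G) ∩ (W : Set G)) :
    x * y ∈ plusplusSet α (W : Set G) ∩ (W : Set G) :=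
  ⟨mul_mem_ppSet hx.1 hy.1, W.mul_mem hx.2 hy.2⟩

lemma mem_H_inv {x : G} (hx : x ∈ plusplusSet α (W : Set G) ∩ (W : Set G)) :
    x⁻¹ ∈ plusplusSet α (W : Set G) ∩ (W : Set G) :=
  ⟨inv_mem_ppSet hx.1, W.inv_mem hx.2⟩

/-- The Baire-category step: the compact group `W₊₊ ∩ W` is covered by the
increasing sequence of compact subgroups `αᴺ(W₊) ∩ W`, hence is contained in
one of them. -/
lemma exists_pow_bound (hα : Continuous ⇑α) (hWc : IsCompact (W : Set G))
    (hT2 : IsClosed (plusplusSet α (W : Set G))) :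
    ∃ M : ℕ, plusplusSet α (W : Set G) ∩ (W : Set G) ⊆
      ⇑(α ^ M) '' plusSet α (W : Set G) := by
  classical
  set A := plusSet α (W : Set G) with hA
  set L := plusplusSet α (W : Set G) with hL
  set H : Set G := L ∩ (W : Set G) with hH
  have hAc : IsCompact A := plusSet_isCompact hα hWc
  have hHc : IsCompact H :=
    hWc.of_isClosed_subset (hT2.inter hWc.isClosed) Set.inter_subset_right
  haveI : CompactSpace ↥H := isCompact_iff_compactSpace.mp hHc
  haveI : Nonempty ↥H := ⟨⟨1, one_mem_H⟩⟩
  have hcl : ∀ nn : ℕ, IsClosed ((Subtype.val ⁻¹' (⇑(α ^ nn) '' A)) : Set ↥H) :=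
    fun nn => ((hAc.image (continuous_pow_apply hα nn)).isClosed).preimage
      continuous_subtype_val
  have hunion : (⋃ nn : ℕ, ((Subtype.val ⁻¹' (⇑(α ^ nn) '' A)) : Set ↥H)) = Set.univ := by
    refine Set.eq_univ_iff_forall.mpr fun x => ?_
    obtain ⟨j, hj⟩ := Set.mem_iUnion.mp x.2.1
    exact Set.mem_iUnion.mpr ⟨j, hj⟩
  obtain ⟨N, yN, hyN⟩ := nonempty_interior_of_iUnion_of_closed hcl hunion
  -- extract an open set of `G` witnessing the interior point
  obtain ⟨U0, hU0, hU0sub⟩ := (mem_nhds_subtype H yN _).mp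
    (isOpen_interior.mem_nhds hyN)
  set O : Set G := interior U0 with hO
  have hOopen : IsOpen O := isOpen_interior
  have hgO : (yN : G) ∈ O := mem_interior_iff_mem_nhds.mpr hU0
  have hgH : (yN : G) ∈ H := yN.2
  set g : G := (yN : G)
  have key : ∀ z, z ∈ H → z ∈ O → z ∈ ⇑(α ^ N) '' A := by
    intro z hz hzO
    have h1 : z ∈ U0 := interior_subset hzO
    have h2 : (⟨z, hz⟩ : ↥H) ∈ Subtype.val ⁻¹' U0 := h1
    have h3 := hU0sub h2
    have h4 : (⟨z, hz⟩ : ↥H) ∈ Subtype.val ⁻¹' (⇑(α ^ N) '' A) := interior_subset h3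
    exact h4
  -- cover `H` by translates of `O`
  set Ucov : ↥H → Set G := fun i => (fun h => (g * (i : G)⁻¹) * h) ⁻¹' O with hUcov
  have hUopen : ∀ i, IsOpen (Ucov i) := fun i => hOopen.preimage (continuous_mul_left _)
  have hcov : H ⊆ ⋃ i : ↥H, Ucov i := by
    intro x hx
    refine Set.mem_iUnion.mpr ⟨⟨x, hx⟩, ?_⟩
    show (g * x⁻¹) * x ∈ O
    rwa [inv_mul_cancel_right]
  obtain ⟨t, ht⟩ := hHc.elim_finite_subcover Ucov hUopen hcov
  have hmemL : ∀ i : ↥H, ∃ j : ℕ, (i : G) ∈ ⇑(α ^ j) '' A := fun i =>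
    Set.mem_iUnion.mp i.2.1
  set e : ↥H → ℕ := fun i => (hmemL i).choose with he
  refine ⟨max N (t.sup e), fun x hx => ?_⟩
  obtain ⟨i, hit, hxU⟩ := Set.mem_iUnion₂.mp (ht hx)
  have hoO : (g * (i : G)⁻¹) * x ∈ O := hxU
  have hoH : (g * (i : G)⁻¹) * x ∈ H := mem_H_mul (mem_H_mul hgH (mem_H_inv i.2)) hx
  have hoA : (g * (i : G)⁻¹) * x ∈ ⇑(α ^ max N (t.sup e)) '' A :=
    mem_image_pow_plusSet_of_le (le_max_left _ _) (key _ hoH hoO)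
  have hgA : g ∈ ⇑(α ^ max N (t.sup e)) '' A :=
    mem_image_pow_plusSet_of_le (le_max_left _ _) (key _ hgH hgO)
  have hiA : (i : G) ∈ ⇑(α ^ max N (t.sup e)) '' A :=
    mem_image_pow_plusSet_of_le (le_trans (Finset.le_sup hit) (le_max_right _ _))
      (hmemL i).choose_spec
  have hxid : x = (i : G) * g⁻¹ * ((g * (i : G)⁻¹) * x) := by
    simp [mul_assoc]
  rw [hxid]
  exact mul_mem_image_pow_plusSet
    (mul_mem_image_pow_plusSet hiA (inv_mem_image_pow_plusSet hgA)) hoA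

/-- `W₊₊ ∩ W₋ ⊆ W₊`. -/
lemma ppSet_inter_minusSet_subset (hα : Continuous ⇑α) (hWc : IsCompact (W : Set G))
    (hT2 : IsClosed (plusplusSet α (W : Set G))) {z : G}
    (hzL : z ∈ plusplusSet α (W : Set G)) (hzB : z ∈ minusSet α (W : Set G)) :
    z ∈ plusSet α (W : Set G) := by
  obtain ⟨M, hM⟩ := exists_pow_bound hα hWc hT2
  have h1 : (α ^ M) z ∈ (W : Set G) := apow_mem_minusSet hzB M
  have h2 : (α ^ M) z ∈ plusplusSet α (W : Set G) := apow_mem_ppSet hzL M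
  have h3 := hM ⟨h2, h1⟩
  rw [mem_image_pow_plusSet] at h3
  have h4 : (α⁻¹ ^ M) ((α ^ M) z) = z := by
    rw [inv_pow]
    simp
  rwa [h4] at h3

/-- `W ∩ W₊₊ = W₊` (the nontrivial inclusion). -/
lemma mem_plusSet_of_mem_ppSet (hα : Continuous ⇑α) (hWc : IsCompact (W : Set G))
    (hW : IsTidy α (W : Set G)) {y : G} (hyW : y ∈ (W : Set G))
    (hyL : y ∈ plusplusSet α (W : Set G)) : y ∈ plusSet α (W : Set G) := by
  have hmem : y ∈ plusSet α (W : Set G) * minusSet α (W : Set G) := hW.1 ▸ hyW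
  obtain ⟨u, hu, v, hv, huv⟩ := Set.mem_mul.mp hmem
  have hvL : v ∈ plusplusSet α (W : Set G) := by
    have hveq : v = u⁻¹ * y := by rw [← huv]; group
    rw [hveq]
    exact mul_mem_ppSet (inv_mem_ppSet (plusSet_subset_ppSet hu)) hyL
  have hvA : v ∈ plusSet α (W : Set G) :=
    ppSet_inter_minusSet_subset hα hWc hW.2 hvL hv
  rw [← huv]
  exact mul_mem_plusSet hu hvA

end TidyAux

theorem stmt2 [LocallyCompactSpace G] [TotallyDisconnectedSpace G] [T2Space G]
    (α : MulAut G) (hα : Continuous ⇑α) (hα' : Continuous ⇑(α⁻¹))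
    (W : Subgroup G) (hWc : IsCompact (W : Set G)) (hWo : IsOpen (W : Set G))
    (hW : IsTidy α (W : Set G))
    (w : G) (m n : ℤ) (hmn : m < n)
    (hm : (α ^ m) w ∈ W) (hn : (α ^ n) w ∈ W) :
    ∀ k : ℤ, m ≤ k → k ≤ n → (α ^ k) w ∈ W := by
  intro k hmk hkn
  have hx : (α ^ m) w ∈ plusSet α (W : Set G) * minusSet α (W : Set G) := by
    rw [← hW.1]; exact hm
  obtain ⟨u, hu, v, hv, huv⟩ := Set.mem_mul.mp hx
  set p : ℕ := (n - m).toNat with hp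
  set d : ℕ := (k - m).toNat with hd
  have hdp : d ≤ p := by
    rw [hp, hd]
    omega
  have key : ∀ j : ℤ, m ≤ j → (α ^ j) w = (α ^ ((j - m).toNat)) ((α ^ m) w) := by
    intro j hj
    have h1 : (((j - m).toNat : ℕ) : ℤ) = j - m := Int.toNat_of_nonneg (by omega)
    calc (α ^ j) w = ((α ^ (j - m)) * (α ^ m)) w := by rw [← zpow_add, sub_add_cancel]
      _ = (α ^ (j - m)) ((α ^ m) w) := by rw [MulAut.mul_apply]
      _ = (α ^ ((j - m).toNat)) ((α ^ m) w) := by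
          conv_lhs => rw [← h1]
          rw [zpow_natCast]
  have hnw : (α ^ p) u * (α ^ p) v ∈ (W : Set G) := by
    have h2 := key n (le_of_lt hmn)
    rw [← huv, map_mul] at h2
    rw [← h2]
    exact hn
  have hyW : (α ^ p) u ∈ (W : Set G) := by
    have h3 : ((α ^ p) u * (α ^ p) v) * ((α ^ p) v)⁻¹ = (α ^ p) u := by group
    rw [← h3]
    exact W.mul_mem hnw (W.inv_mem (apow_mem_minusSet hv p))
  have hyL : (α ^ p) u ∈ plusplusSet α (W : Set G) :=
    apow_mem_ppSet (plusSet_subset_ppSet hu) p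
  have hyA : (α ^ p) u ∈ plusSet α (W : Set G) :=
    mem_plusSet_of_mem_ppSet hα hWc hW hyW hyL
  have hdu : (α ^ d) u ∈ (W : Set G) := by
    have h5 : (α⁻¹ ^ (p - d)) ((α ^ p) u) = (α ^ d) u := by
      rw [← MulAut.mul_apply]
      congr 1
      rw [inv_pow]
      have h6 : α ^ p = α ^ (p - d) * α ^ d := by
        rw [← pow_add, Nat.sub_add_cancel hdp]
      rw [h6, inv_mul_cancel_left]
    rw [← h5]
    exact plusSet_subset (ainv_mem_plusSet hyA (p - d))
  have h7 := key k hmk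
  rw [← huv, map_mul] at h7
  rw [h7]
  exact W.mul_mem hdu (apow_mem_minusSet hv d)
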